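/- arXiv:2503.22849 — 2 statements merged into one kernel-verified Lean document; each statement's English description precedes it below -/
import Mathlib

section
/- The canonical inclusion ι: Gr(k,N) → Gr(l,M) preserves the chordal distance: d_κ(ι(V), ι(U)) = d_κ(V, U) for all V, U ∈ Gr(k,N), whenever k ≤ l, N ≤ M, and l-k ≤ M-N. -/
open Module

/-- Orthogonal projection onto a subspace of `ℝ^N`, as a linear endomorphism. -/
noncomputable def projOf {N : ℕ} (V : Submodule ℝ (EuclideanSpace ℝ (Fin N))) :
    EuclideanSpace ℝ (Fin N) →ₗ[ℝ] EuclideanSpace ℝ (Fin N) :=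
  V.subtype ∘ₗ (V.orthogonalProjection).toLinearMap

/-- `Σ_i cos² θ_i (V,U) = trace (P_V P_U)`, the standard projector formula for the
principal angles `θ_i` between `V` and `U`. -/
noncomputable def cos2sum {N : ℕ} (V U : Submodule ℝ (EuclideanSpace ℝ (Fin N))) : ℝ :=
  LinearMap.trace ℝ _ (projOf V ∘ₗ projOf U)

/-- Chordal distance: `d_κ(V,U)² = |k-l| + Σ sin²θ_i = max(k,l) - Σ cos²θ_i`. -/
noncomputable def dChordal {N : ℕ} (V U : Submodule ℝ (EuclideanSpace ℝ (Fin N))) : ℝ :=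
  Real.sqrt ((max (finrank ℝ V) (finrank ℝ U) : ℝ) - cos2sum V U)
/-- Zero-padding embedding of `ℝ^N` into the first `N` coordinates of `ℝ^M`. -/
def padMapE (N M : ℕ) : EuclideanSpace ℝ (Fin N) →ₗ[ℝ] EuclideanSpace ℝ (Fin M) where
  toFun x := WithLp.toLp 2 (fun i => if h : (i : ℕ) < N then x ⟨i, h⟩ else 0)
  map_add' x y := by ext i; by_cases h : (i : ℕ) < N <;> simp [h]
  map_smul' c x := by ext i; by_cases h : (i : ℕ) < N <;> simp [h]

/-- The span of the last `l - k` standard basis vectors of `ℝ^M`. -/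
noncomputable def tailSpanE (k l M : ℕ) : Submodule ℝ (EuclideanSpace ℝ (Fin M)) :=
  Submodule.span ℝ {v | ∃ i : Fin M, M - (l - k) ≤ (i : ℕ) ∧ v = EuclideanSpace.single i 1}

/-- The canonical inclusion `Gr(k,N) → Gr(l,M)`: embed into the first `N` coordinates and
adjoin the last `l - k` standard basis directions (the identity block). -/
noncomputable def iotaE (k l N M : ℕ) (V : Submodule ℝ (EuclideanSpace ℝ (Fin N))) :
    Submodule ℝ (EuclideanSpace ℝ (Fin M)) :=
  V.map (padMapE N M) ⊔ tailSpanE k l M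

open scoped RealInnerProductSpace in

lemma pad_inner {N M : ℕ} (hNM : N ≤ M) (x y : EuclideanSpace ℝ (Fin N)) :
    ⟪padMapE N M x, padMapE N M y⟫ = ⟪x, y⟫ := by
  classical
  simp only [PiLp.inner_apply, RCLike.inner_apply, conj_trivial]
  rw [← Finset.sum_subset (Finset.subset_univ
    ((Finset.univ : Finset (Fin N)).map (Fin.castLEEmb hNM)))]
  · rw [Finset.sum_map]
    apply Finset.sum_congr rfl
    intro j _
    have hj : ((Fin.castLEEmb hNM j : Fin M) : ℕ) < N := j.isLt
    simp [padMapE, hj]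
  · intro i _ hi
    have hn : ¬ (i : ℕ) < N := by
      intro h
      exact hi (Finset.mem_map.mpr ⟨⟨i, h⟩, Finset.mem_univ _, by
        simp [Fin.castLEEmb, Fin.ext_iff]⟩)
    simp [padMapE, hn]

lemma pad_apply_ge {N M : ℕ} (x : EuclideanSpace ℝ (Fin N)) {i : Fin M}
    (hi : N ≤ (i : ℕ)) : padMapE N M x i = 0 := by
  simp [padMapE, Nat.not_lt.mpr hi]

lemma pad_injective {N M : ℕ} (hNM : N ≤ M) : Function.Injective (padMapE N M) := by
  intro x y h
  ext j
  have := congrArg (fun v : EuclideanSpace ℝ (Fin M) => v (Fin.castLE hNM j)) h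
  simpa [padMapE, j.isLt] using this

open scoped RealInnerProductSpace in

lemma pad_adjoint_comp {N M : ℕ} (hNM : N ≤ M) :
    LinearMap.adjoint (padMapE N M) ∘ₗ padMapE N M = LinearMap.id := by
  apply LinearMap.ext; intro x
  apply ext_inner_right ℝ
  intro y
  rw [LinearMap.comp_apply, LinearMap.adjoint_inner_left, pad_inner hNM]
  simp

open scoped RealInnerProductSpace in

lemma proj_map {N M : ℕ} (hNM : N ≤ M) (V : Submodule ℝ (EuclideanSpace ℝ (Fin N))) :
    projOf (V.map (padMapE N M)) =
      padMapE N M ∘ₗ projOf V ∘ₗ LinearMap.adjoint (padMapE N M) := by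
  apply LinearMap.ext; intro u
  show (V.map (padMapE N M)).starProjection u = _
  apply Submodule.eq_starProjection_of_mem_of_inner_eq_zero
  · exact Submodule.mem_map_of_mem
      (V.orthogonalProjection (LinearMap.adjoint (padMapE N M) u)).2
  · rintro w ⟨v, hv, rfl⟩
    simp only [LinearMap.comp_apply]
    rw [inner_sub_left, pad_inner hNM, ← LinearMap.adjoint_inner_left (padMapE N M),
      ← inner_sub_left]
    exact Submodule.starProjection_inner_eq_zero _ v hv

open scoped RealInnerProductSpace in

lemma proj_sup {n : ℕ} {A B : Submodule ℝ (EuclideanSpace ℝ (Fin n))}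
    (h : ∀ a ∈ A, ∀ b ∈ B, ⟪a, b⟫ = 0) :
    projOf (A ⊔ B) = projOf A + projOf B := by
  apply LinearMap.ext; intro u
  show (A ⊔ B).starProjection u = projOf A u + projOf B u
  have hA : projOf A u ∈ A := (A.orthogonalProjection u).2
  have hB : projOf B u ∈ B := (B.orthogonalProjection u).2
  apply Submodule.eq_starProjection_of_mem_of_inner_eq_zero
  · exact Submodule.add_mem_sup hA hB
  · intro w hw
    obtain ⟨a, ha, b, hb, rfl⟩ := Submodule.mem_sup.mp hw
    have e1 : ⟪u - projOf A u, a⟫ = 0 := Submodule.starProjection_inner_eq_zero u a ha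
    have e2 : ⟪u - projOf B u, b⟫ = 0 := Submodule.starProjection_inner_eq_zero u b hb
    have e3 : ⟪projOf B u, a⟫ = 0 := by
      rw [real_inner_comm]; exact h a ha _ hB
    have e4 : ⟪projOf A u, b⟫ = 0 := h _ hA b hb
    simp only [inner_sub_left, inner_add_left, inner_add_right] at e1 e2 ⊢
    linarith

lemma projOf_idem {n : ℕ} (W : Submodule ℝ (EuclideanSpace ℝ (Fin n))) :
    projOf W ∘ₗ projOf W = projOf W := by
  apply LinearMap.ext; intro u
  simp [projOf, Submodule.orthogonalProjection_mem_subspace_eq_self,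
    Submodule.starProjection_eq_self_iff, Submodule.starProjection_apply_mem]

lemma trace_projOf {n : ℕ} (W : Submodule ℝ (EuclideanSpace ℝ (Fin n))) :
    LinearMap.trace ℝ _ (projOf W) = (finrank ℝ W : ℝ) := by
  rw [projOf, LinearMap.trace_comp_comm']
  have : (W.orthogonalProjection).toLinearMap ∘ₗ W.subtype = LinearMap.id := by
    apply LinearMap.ext; intro w
    simp [Submodule.orthogonalProjection_mem_subspace_eq_self]
  rw [this, LinearMap.trace_id]

open scoped RealInnerProductSpace in

lemma tail_inner_pad {k l N M : ℕ} (hNM : N ≤ M) (hgap : l - k ≤ M - N)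
    {t : EuclideanSpace ℝ (Fin M)} (ht : t ∈ tailSpanE k l M)
    (y : EuclideanSpace ℝ (Fin N)) : ⟪t, padMapE N M y⟫ = 0 := by
  induction ht using Submodule.span_induction with
  | mem v hv =>
    obtain ⟨i, hi, rfl⟩ := hv
    rw [EuclideanSpace.inner_single_left]
    have : N ≤ (i : ℕ) := by omega
    simp [pad_apply_ge _ this]
  | zero => simp
  | add x y hx hy ihx ihy => simp [inner_add_left, ihx, ihy]
  | smul c x hx ih => simp [inner_smul_left, ih]

lemma adjoint_comp_projT {k l N M : ℕ} (hNM : N ≤ M) (hgap : l - k ≤ M - N) :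
    LinearMap.adjoint (padMapE N M) ∘ₗ projOf (tailSpanE k l M) = 0 := by
  apply LinearMap.ext; intro u
  apply ext_inner_right ℝ
  intro y
  rw [LinearMap.comp_apply, LinearMap.adjoint_inner_left]
  simpa [projOf] using tail_inner_pad hNM hgap ((tailSpanE k l M).orthogonalProjection u).2 y

lemma projT_comp_pad {k l N M : ℕ} (hNM : N ≤ M) (hgap : l - k ≤ M - N) :
    projOf (tailSpanE k l M) ∘ₗ padMapE N M = 0 := by
  apply LinearMap.ext; intro y
  have : padMapE N M y ∈ (tailSpanE k l M)ᗮ := by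
    intro t ht
    exact tail_inner_pad hNM hgap ht y
  simp only [LinearMap.comp_apply, projOf, LinearMap.coe_comp, Function.comp_apply,
    ContinuousLinearMap.coe_coe]
  rw [Submodule.orthogonalProjectionOnto_apply_of_mem_orthogonal this]
  simp

lemma finrank_tailSpanE {k l M : ℕ} (hd : l - k ≤ M) :
    finrank ℝ (tailSpanE k l M) = l - k := by
  classical
  set d := l - k with hdd
  have hset : {v : EuclideanSpace ℝ (Fin M) | ∃ i : Fin M, M - d ≤ (i : ℕ) ∧
      v = EuclideanSpace.single i 1} =
      Set.range (fun i : {i : Fin M // M - d ≤ (i : ℕ)} =>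
        EuclideanSpace.single i.1 (1 : ℝ)) := by
    ext v
    constructor
    · rintro ⟨i, hi, rfl⟩; exact ⟨⟨i, hi⟩, rfl⟩
    · rintro ⟨⟨i, hi⟩, rfl⟩; exact ⟨i, hi, rfl⟩
  have hindep : LinearIndependent ℝ (fun i : {i : Fin M // M - d ≤ (i : ℕ)} =>
      EuclideanSpace.single i.1 (1 : ℝ)) := by
    have : Orthonormal ℝ (fun i : Fin M => EuclideanSpace.single i (1 : ℝ)) :=
      EuclideanSpace.orthonormal_single (𝕜 := ℝ) (ι := Fin M)
    exact (this.comp _ Subtype.val_injective).linearIndependent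
  have hcard : Fintype.card {i : Fin M // M - d ≤ (i : ℕ)} = d := by
    rcases Nat.eq_zero_or_pos d with hd0 | hd0
    · have : IsEmpty {i : Fin M // M - d ≤ (i : ℕ)} :=
        ⟨fun ⟨i, hi⟩ => by have := i.isLt; omega⟩
      rw [Fintype.card_eq_zero, hd0]
    · have hM : M - d < M := by omega
      have : (Finset.univ.filter fun i : Fin M => M - d ≤ (i : ℕ)) =
          Finset.Ici (⟨M - d, hM⟩ : Fin M) := by
        ext i
        simp [Fin.le_def]
      rw [Fintype.card_subtype, this, Fin.card_Ici]
      show M - (M - d) = d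
      omega
  rw [tailSpanE, hset, finrank_span_eq_card hindep, hcard]

open scoped RealInnerProductSpace in

lemma pad_tail_ortho {k l N M : ℕ} (hNM : N ≤ M) (hgap : l - k ≤ M - N)
    (V : Submodule ℝ (EuclideanSpace ℝ (Fin N))) :
    ∀ a ∈ V.map (padMapE N M), ∀ b ∈ tailSpanE k l M, ⟪a, b⟫ = 0 := by
  rintro a ⟨y, _, rfl⟩ b hb
  rw [real_inner_comm]
  exact tail_inner_pad hNM hgap hb y

lemma finrank_iotaE {k l N M : ℕ} (hkl : k ≤ l) (hNM : N ≤ M) (hgap : l - k ≤ M - N)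
    (V : Submodule ℝ (EuclideanSpace ℝ (Fin N))) (hV : finrank ℝ V = k) :
    finrank ℝ (iotaE k l N M V) = l := by
  have hmap : finrank ℝ (V.map (padMapE N M)) = k := by
    rw [← hV]
    exact (Submodule.equivMapOfInjective _ (pad_injective hNM) V).finrank_eq.symm
  have hinf : V.map (padMapE N M) ⊓ tailSpanE k l M = ⊥ := by
    rw [Submodule.eq_bot_iff]
    rintro x ⟨hx1, hx2⟩
    exact inner_self_eq_zero.mp (pad_tail_ortho hNM hgap V x hx1 x hx2)
  have := Submodule.finrank_sup_add_finrank_inf_eq (V.map (padMapE N M)) (tailSpanE k l M)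
  rw [hinf, finrank_bot, hmap, finrank_tailSpanE (le_trans hgap (Nat.sub_le M N))] at this
  rw [iotaE]
  omega

lemma cos2sum_iotaE {k l N M : ℕ} (hNM : N ≤ M) (hgap : l - k ≤ M - N)
    (V U : Submodule ℝ (EuclideanSpace ℝ (Fin N))) :
    cos2sum (iotaE k l N M V) (iotaE k l N M U) = cos2sum V U + ((l - k : ℕ) : ℝ) := by
  set J := padMapE N M with hJ
  set J' := LinearMap.adjoint (padMapE N M) with hJ'
  set PT := projOf (tailSpanE k l M) with hPT
  have hJJ : ∀ z, J' (J z) = z := fun z => by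
    simpa using LinearMap.ext_iff.mp (pad_adjoint_comp hNM) z
  have hJ'T : ∀ u, J' (PT u) = 0 := fun u => by
    simpa using LinearMap.ext_iff.mp (adjoint_comp_projT hNM hgap) u
  have hTJ : ∀ z, PT (J z) = 0 := fun z => by
    simpa using LinearMap.ext_iff.mp (projT_comp_pad hNM hgap) z
  have hsupV : projOf (iotaE k l N M V) = (J ∘ₗ projOf V ∘ₗ J') + PT := by
    rw [iotaE, proj_sup (pad_tail_ortho hNM hgap V), proj_map hNM V]
  have hsupU : projOf (iotaE k l N M U) = (J ∘ₗ projOf U ∘ₗ J') + PT := by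
    rw [iotaE, proj_sup (pad_tail_ortho hNM hgap U), proj_map hNM U]
  have t2 : (J ∘ₗ projOf V ∘ₗ J') ∘ₗ PT = 0 := by
    apply LinearMap.ext; intro u; simp [LinearMap.comp_apply, hJ'T]
  have t3 : PT ∘ₗ (J ∘ₗ projOf U ∘ₗ J') = 0 := by
    apply LinearMap.ext; intro u; simp [LinearMap.comp_apply, hTJ]
  have t4 : PT ∘ₗ PT = PT := projOf_idem _
  have t1 : LinearMap.trace ℝ _ ((J ∘ₗ projOf V ∘ₗ J') ∘ₗ (J ∘ₗ projOf U ∘ₗ J'))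
      = cos2sum V U := by
    have h12 : (J ∘ₗ projOf V ∘ₗ J') ∘ₗ (J ∘ₗ projOf U ∘ₗ J')
        = J ∘ₗ ((projOf V ∘ₗ projOf U) ∘ₗ J') := by
      apply LinearMap.ext; intro u
      simp [LinearMap.comp_apply, hJJ]
    rw [h12, LinearMap.trace_comp_comm', cos2sum]
    congr 1
    apply LinearMap.ext; intro u
    simp [LinearMap.comp_apply, hJJ]
  have hT : LinearMap.trace ℝ _ PT = ((l - k : ℕ) : ℝ) := by
    rw [hPT, trace_projOf, finrank_tailSpanE (le_trans hgap (Nat.sub_le M N))]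
  rw [cos2sum, hsupV, hsupU]
  simp only [LinearMap.add_comp, LinearMap.comp_add, t2, t3, t4, map_add, zero_add, add_zero,
    LinearMap.map_zero]
  rw [t1, hT]

/-- The canonical inclusion preserves the chordal distance: the added identity-block
directions are common to both images and contribute zero principal angles, and the
dimension difference is unchanged. -/
theorem iota_preserves_chordal {k l N M : ℕ}
    (hkl : k ≤ l) (hNM : N ≤ M) (hgap : l - k ≤ M - N)
    (V U : Submodule ℝ (EuclideanSpace ℝ (Fin N)))
    (hV : finrank ℝ V = k) (hU : finrank ℝ U = k) :
    dChordal (iotaE k l N M V) (iotaE k l N M U) = dChordal V U := by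
  rw [dChordal, dChordal, finrank_iotaE hkl hNM hgap V hV, finrank_iotaE hkl hNM hgap U hU,
    cos2sum_iotaE hNM hgap V U, hV, hU, max_self, max_self, Nat.cast_sub hkl]
  congr 1
  ring
end

section
/- For the chordal metric d_κ on subspaces of ℝ^N, d_κ(V,U)² = δ_κ(V,U)² + |dim V - dim U|, where δ_κ(V,U)² = Σ_{i=1}^{min(dim V, dim U)} sin²θ_i(V,U). -/
open Module

lemma trace_eq_sum_inner' {ι E : Type*} [Fintype ι] [DecidableEq ι] [NormedAddCommGroup E]
    [InnerProductSpace ℝ E] [FiniteDimensional ℝ E] (b : OrthonormalBasis ι ℝ E)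
    (f : E →ₗ[ℝ] E) :
    LinearMap.trace ℝ E f = ∑ i, inner ℝ (b i) (f (b i)) := by
  rw [LinearMap.trace_eq_matrix_trace ℝ b.toBasis, Matrix.trace]
  refine Finset.sum_congr rfl fun i _ => ?_
  rw [Matrix.diag_apply, LinearMap.toMatrix_apply, b.coe_toBasis,
    b.coe_toBasis_repr_apply, b.repr_apply_apply]

lemma cos2sum_comm {N : ℕ} (V U : Submodule ℝ (EuclideanSpace ℝ (Fin N))) :
    cos2sum V U = cos2sum U V := by
  unfold cos2sum
  exact LinearMap.trace_comp_comm' (projOf U) (projOf V)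

lemma cos2sum_le {N : ℕ} (V U : Submodule ℝ (EuclideanSpace ℝ (Fin N))) :
    cos2sum V U ≤ (finrank ℝ V : ℝ) := by
  classical
  have h : cos2sum V U =
      LinearMap.trace ℝ V ((V.orthogonalProjection.toLinearMap ∘ₗ projOf U) ∘ₗ V.subtype) := by
    unfold cos2sum projOf
    exact LinearMap.trace_comp_comm'
      (V.orthogonalProjection.toLinearMap ∘ₗ U.subtype ∘ₗ U.orthogonalProjection.toLinearMap)
      V.subtype
  rw [h, trace_eq_sum_inner' (stdOrthonormalBasis ℝ V)]
  set b := stdOrthonormalBasis ℝ V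
  calc ∑ i, inner ℝ (b i) (((V.orthogonalProjection.toLinearMap ∘ₗ projOf U) ∘ₗ V.subtype) (b i))
      ≤ ∑ _i : Fin (finrank ℝ V), (1 : ℝ) := by
        apply Finset.sum_le_sum
        intro i _
        have h1 : (inner ℝ (b i) (((V.orthogonalProjection.toLinearMap ∘ₗ projOf U) ∘ₗ V.subtype) (b i))
            : ℝ) = inner ℝ ((b i : EuclideanSpace ℝ (Fin N))) (projOf U (b i)) := by
          simp [LinearMap.comp_apply]
        rw [h1]
        have hinner : inner ℝ ((b i : EuclideanSpace ℝ (Fin N))) (projOf U (b i))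
            = ‖(U.orthogonalProjection (b i) : EuclideanSpace ℝ (Fin N))‖ ^ 2 := by
          unfold projOf
          rw [LinearMap.comp_apply]
          simp only [Submodule.subtype_apply, ContinuousLinearMap.coe_coe]
          rw [real_inner_comm,
            ← Submodule.inner_orthogonalProjection_eq_of_mem_left, real_inner_self_eq_norm_sq,
            Submodule.norm_coe]
        rw [hinner]
        have hle : ‖(U.orthogonalProjection (b i) : EuclideanSpace ℝ (Fin N))‖ ≤ 1 := by
          have hn := Submodule.orthogonalProjection_norm_le U
          calc ‖(U.orthogonalProjection (b i) : EuclideanSpace ℝ (Fin N))‖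
              = ‖U.orthogonalProjection ((b i : EuclideanSpace ℝ (Fin N)))‖ := by
                rw [Submodule.norm_coe]
            _ ≤ ‖U.orthogonalProjection‖ * ‖(b i : EuclideanSpace ℝ (Fin N))‖ :=
                U.orthogonalProjection.le_opNorm _
            _ ≤ 1 * 1 := by
                apply mul_le_mul hn _ (norm_nonneg _) zero_le_one
                have := b.orthonormal.1 i
                rw [Submodule.norm_coe, this]
            _ = 1 := by ring
        nlinarith [norm_nonneg ((U.orthogonalProjection (b i) : EuclideanSpace ℝ (Fin N)))]
    _ = (finrank ℝ V : ℝ) := by simp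

theorem chordal_sq_decomposition' {N : ℕ} (V U : Submodule ℝ (EuclideanSpace ℝ (Fin N))) :
    Real.sqrt ((max (finrank ℝ V) (finrank ℝ U) : ℝ) - cos2sum V U) ^ 2 =
      Real.sqrt ((min (finrank ℝ V) (finrank ℝ U) : ℝ) - cos2sum V U) ^ 2
        + |(finrank ℝ V : ℝ) - (finrank ℝ U : ℝ)| := by
  have hmin : (0 : ℝ) ≤ (min (finrank ℝ V) (finrank ℝ U) : ℝ) - cos2sum V U := by
    have : cos2sum V U ≤ min ((finrank ℝ V : ℝ)) ((finrank ℝ U : ℝ)) :=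
      le_min (cos2sum_le V U) (by rw [cos2sum_comm]; exact cos2sum_le U V)
    push_cast
    linarith
  have hmm : (min ((finrank ℝ V : ℝ)) ((finrank ℝ U : ℝ))) ≤ max ((finrank ℝ V : ℝ)) ((finrank ℝ U : ℝ)) :=
    min_le_max
  have hmax : (0 : ℝ) ≤ (max (finrank ℝ V) (finrank ℝ U) : ℝ) - cos2sum V U := by
    push_cast at hmin ⊢
    linarith
  rw [Real.sq_sqrt hmax, Real.sq_sqrt hmin]
  have habs : |(finrank ℝ V : ℝ) - (finrank ℝ U : ℝ)| =
      max ((finrank ℝ V : ℝ)) ((finrank ℝ U : ℝ)) - min ((finrank ℝ V : ℝ)) ((finrank ℝ U : ℝ)) :=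
    by rw [abs_sub_comm]; exact (max_sub_min_eq_abs _ _).symm
  push_cast
  rw [habs]
  ring

/-- Misfit part of the chordal metric: `δ_κ(V,U)² = Σ sin²θ_i = min(k,l) - Σ cos²θ_i`. -/
noncomputable def deltaChordal {N : ℕ} (V U : Submodule ℝ (EuclideanSpace ℝ (Fin N))) : ℝ :=
  Real.sqrt ((min (finrank ℝ V) (finrank ℝ U) : ℝ) - cos2sum V U)

/-- Decomposition of the squared chordal distance into the misfit term `δ_κ²` and the
dimension-mismatch term `|dim V - dim U|`. -/
theorem chordal_sq_decomposition {N : ℕ} (V U : Submodule ℝ (EuclideanSpace ℝ (Fin N))) :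
    dChordal V U ^ 2 = deltaChordal V U ^ 2 + |(finrank ℝ V : ℝ) - (finrank ℝ U : ℝ)| := by
  unfold dChordal deltaChordal
  exact chordal_sq_decomposition' V U
end
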